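/- Let H be a Hilbert space and L1, L2, L3, L4 closed subspaces. If L1 ⊥ L2 | L4 and L1 ⊥ L3 | (L2 ∨ L4), then L1 ⊥ (L2 ∨ L3) | L4 (contraction property of conditional orthogonality). -/

import Mathlib

open scoped InnerProductSpace

/-- Conditional orthogonality: `L1 ⊥ L2 | L3`. -/
def CondOrth {H : Type*} [NormedAddCommGroup H] [InnerProductSpace ℂ H]
    (L1 L2 L3 : Submodule ℂ H) [CompleteSpace L3] : Prop :=
  ∀ x ∈ L1, ∀ y ∈ L2,
    ⟪x - (L3.orthogonalProjectionOnto x : H), y - (L3.orthogonalProjectionOnto y : H)⟫_ℂ = 0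

/-- Contraction property of conditional orthogonality:
if `L1 ⊥ L2 | L4` and `L1 ⊥ L3 | (L2 ∨ L4)` then `L1 ⊥ (L2 ∨ L3) | L4`. -/
theorem condOrth_contraction {H : Type*} [NormedAddCommGroup H] [InnerProductSpace ℂ H]
    [CompleteSpace H] (L1 L2 L3 L4 : Submodule ℂ H)
    (h1 : IsClosed (L1 : Set H)) (h2 : IsClosed (L2 : Set H))
    (h3 : IsClosed (L3 : Set H)) (h4 : IsClosed (L4 : Set H))
    [CompleteSpace L4]
    (ha : CondOrth L1 L2 L4)
    (hb : CondOrth L1 L3 ((L2 ⊔ L4).topologicalClosure)) :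
    CondOrth L1 ((L2 ⊔ L3).topologicalClosure) L4 := by
  intro x hx y hy
  set M := (L2 ⊔ L4).topologicalClosure with hM
  set v : H := x - (L4.orthogonalProjectionOnto x : H) with hv
  have hvL4 : v ∈ L4ᗮ := Submodule.sub_starProjection_mem_orthogonal (K := L4) x
  -- v is orthogonal to every element of L4
  have hinner4 : ∀ u ∈ L4, ⟪v, u⟫_ℂ = 0 := fun u hu =>
    Submodule.mem_orthogonal' L4 v |>.mp hvL4 u hu
  -- v is orthogonal to every element of L2
  have hinner2 : ∀ u ∈ L2, ⟪v, u⟫_ℂ = 0 := by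
    intro u hu
    have h0 := ha x hx u hu
    have h1' : ⟪v, (L4.orthogonalProjectionOnto u : H)⟫_ℂ = 0 :=
      hinner4 _ (L4.orthogonalProjectionOnto u).2
    rw [inner_sub_right] at h0
    rw [← hv] at h0
    rw [h1'] at h0
    simpa using h0
  -- hence v ⊥ M
  have hvM : v ∈ Mᗮ := by
    have hle : L2 ⊔ L4 ≤ (ℂ ∙ v)ᗮ := by
      apply sup_le
      · intro u hu
        exact Submodule.mem_orthogonal_singleton_iff_inner_right.mpr (hinner2 u hu)
      · intro u hu
        exact Submodule.mem_orthogonal_singleton_iff_inner_right.mpr (hinner4 u hu)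
    have hle' : M ≤ (ℂ ∙ v)ᗮ :=
      Submodule.topologicalClosure_minimal _ hle (Submodule.isClosed_orthogonal _)
    intro u hu
    exact inner_eq_zero_symm.mp (Submodule.mem_orthogonal_singleton_iff_inner_right.mp (hle' hu))
  have hinnerM : ∀ u ∈ M, ⟪v, u⟫_ℂ = 0 := fun u hu =>
    Submodule.mem_orthogonal' M v |>.mp hvM u hu
  -- v is orthogonal to every element of L3
  have hinner3 : ∀ u ∈ L3, ⟪v, u⟫_ℂ = 0 := by
    intro u hu
    have hQ := hb x hx u hu
    have hdiff : (M.orthogonalProjectionOnto x : H) - (L4.orthogonalProjectionOnto x : H) ∈ M := by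
      apply sub_mem (M.orthogonalProjectionOnto x).2
      exact Submodule.le_topologicalClosure _
        (le_sup_right (a := L2) (L4.orthogonalProjectionOnto x).2)
    have huQ : u - (M.orthogonalProjectionOnto u : H) ∈ Mᗮ :=
      Submodule.sub_starProjection_mem_orthogonal (K := M) u
    have hterm1 : ⟪v, u - (M.orthogonalProjectionOnto u : H)⟫_ℂ = 0 := by
      have : v = (x - (M.orthogonalProjectionOnto x : H)) +
          ((M.orthogonalProjectionOnto x : H) - (L4.orthogonalProjectionOnto x : H)) := by
        rw [hv]; abel
      rw [this, inner_add_left, hQ]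
      have : ⟪(M.orthogonalProjectionOnto x : H) - (L4.orthogonalProjectionOnto x : H),
          u - (M.orthogonalProjectionOnto u : H)⟫_ℂ = 0 :=
        huQ _ hdiff
      rw [this]; ring
    have hterm2 : ⟪v, (M.orthogonalProjectionOnto u : H)⟫_ℂ = 0 :=
      hinnerM _ (M.orthogonalProjectionOnto u).2
    calc ⟪v, u⟫_ℂ = ⟪v, u - (M.orthogonalProjectionOnto u : H)⟫_ℂ
          + ⟪v, (M.orthogonalProjectionOnto u : H)⟫_ℂ := by
          rw [← inner_add_right, sub_add_cancel]
      _ = 0 := by rw [hterm1, hterm2]; ring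
  -- combine: v orthogonal to closure (L2 ⊔ L3)
  have hfinal : ∀ u ∈ (L2 ⊔ L3).topologicalClosure, ⟪v, u⟫_ℂ = 0 := by
    have hle : L2 ⊔ L3 ≤ (ℂ ∙ v)ᗮ := by
      apply sup_le
      · intro u hu
        exact Submodule.mem_orthogonal_singleton_iff_inner_right.mpr (hinner2 u hu)
      · intro u hu
        exact Submodule.mem_orthogonal_singleton_iff_inner_right.mpr (hinner3 u hu)
    intro u hu
    exact Submodule.mem_orthogonal_singleton_iff_inner_right.mp
      (Submodule.topologicalClosure_minimal _ hle (Submodule.isClosed_orthogonal _) hu)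
  rw [inner_sub_right, hfinal y hy, hinner4 _ (L4.orthogonalProjectionOnto y).2]
  ring
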